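/- Let (X,d) be a compact metric space, 𝕀 = {S_1,...,S_N} an IFS of bi-Lipschitz contractions on X with compact condensation set C, upper Lipschitz dimension s, and let d = dim_H F_C. Suppose 0 < ℋ^d(C) < ∞ and that 𝕀 satisfies the COSC and bounded distortion. Then ℋ^d(F_C) = ∞ if and only if d ≤ s. -/

import Mathlib

open Metric Filter Set MeasureTheory Topology

/-- The upper Lipschitz constant `Lip⁺(S) = sup_{x ≠ y} d(S x, S y)/d(x,y)`. -/
noncomputable def LipPlus {X : Type*} [MetricSpace X] (S : X → X) : ℝ :=
  sSup {r : ℝ | ∃ x y : X, x ≠ y ∧ r = dist (S x) (S y) / dist x y}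

/-- The lower Lipschitz constant `Lip⁻(S) = inf_{x ≠ y} d(S x, S y)/d(x,y)`. -/
noncomputable def LipMinus {X : Type*} [MetricSpace X] (S : X → X) : ℝ :=
  sInf {r : ℝ | ∃ x y : X, x ≠ y ∧ r = dist (S x) (S y) / dist x y}

/-- `S` is a bi-Lipschitz contraction: `0 < Lip⁻(S) ≤ Lip⁺(S) < 1`,
with `Lip⁺(S)` and `Lip⁻(S)` genuine upper/lower Lipschitz bounds. -/
def IsBiLipContraction {X : Type*} [MetricSpace X] (S : X → X) : Prop :=
  (∀ x y : X, dist (S x) (S y) ≤ LipPlus S * dist x y) ∧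
  (∀ x y : X, LipMinus S * dist x y ≤ dist (S x) (S y)) ∧
  0 < LipMinus S ∧ LipMinus S ≤ LipPlus S ∧ LipPlus S < 1

/-- `S_𝐢 = S_{i₁} ∘ ⋯ ∘ S_{i_k}` for a finite word `𝐢` over `{1,…,N}`. -/
def compList {X : Type*} {N : ℕ} (S : Fin N → X → X) : List (Fin N) → X → X
  | [] => id
  | i :: w => S i ∘ compList S w

/-- The condensation open set condition. -/
def COSC {X : Type*} [MetricSpace X] {N : ℕ} (S : Fin N → X → X) (C : Set X) : Prop :=
  ∃ U : Set X, IsOpen U ∧ C ⊆ U \ (⋃ i, closure (S i '' U)) ∧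
    (∀ i, S i '' U ⊆ U) ∧ ∀ i j, i ≠ j → Disjoint (S i '' U) (S j '' U)

/-- Bounded distortion: `Lip⁺(S_𝐢)/Lip⁻(S_𝐢) < L` uniformly over all finite words `𝐢`. -/
def BoundedDistortion {X : Type*} [MetricSpace X] {N : ℕ} (S : Fin N → X → X) : Prop :=
  ∃ L : ℝ, 1 < L ∧ ∀ w : List (Fin N), w ≠ [] →
    LipPlus (compList S w) / LipMinus (compList S w) < L

section Aux1
variable {X : Type*} [MetricSpace X] {N : ℕ} {S : Fin N → X → X}

lemma myLipPlus_nonneg (f : X → X) : 0 ≤ LipPlus f :=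
  Real.sSup_nonneg (by rintro r ⟨x, y, hxy, rfl⟩; exact div_nonneg dist_nonneg dist_nonneg)

lemma myLipMinus_nonneg (f : X → X) : 0 ≤ LipMinus f :=
  Real.sInf_nonneg (by rintro r ⟨x, y, hxy, rfl⟩; exact div_nonneg dist_nonneg dist_nonneg)

lemma lipPlus_le {f : X → X} {K : ℝ} (hK : 0 ≤ K)
    (h : ∀ x y : X, dist (f x) (f y) ≤ K * dist x y) : LipPlus f ≤ K := by
  apply Real.sSup_le _ hK
  rintro r ⟨x, y, hxy, rfl⟩
  rw [div_le_iff₀ (dist_pos.2 hxy)]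
  exact h x y

lemma dist_le_lipPlus {f : X → X} {K : ℝ}
    (h : ∀ x y : X, dist (f x) (f y) ≤ K * dist x y) (x y : X) :
    dist (f x) (f y) ≤ LipPlus f * dist x y := by
  rcases eq_or_ne x y with rfl | hxy
  · have : dist (f x) (f x) = 0 := dist_self _
    simp [this, mul_nonneg (myLipPlus_nonneg f) dist_nonneg]
  · have hb : BddAbove {r : ℝ | ∃ x y : X, x ≠ y ∧ r = dist (f x) (f y) / dist x y} := by
      refine ⟨max K 0, ?_⟩
      rintro r ⟨a, b, hab, rfl⟩
      exact le_trans ((div_le_iff₀ (dist_pos.2 hab)).2 (h a b)) (le_max_left _ _)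
    have hle := le_csSup hb (⟨x, y, hxy, rfl⟩ :
      dist (f x) (f y) / dist x y ∈ {r : ℝ | ∃ x y : X, x ≠ y ∧ r = dist (f x) (f y) / dist x y})
    rw [div_le_iff₀ (dist_pos.2 hxy)] at hle
    exact hle

lemma lipMinus_dist_le (f : X → X) (x y : X) :
    LipMinus f * dist x y ≤ dist (f x) (f y) := by
  rcases eq_or_ne x y with rfl | hxy
  · simp
  · have hb : BddBelow {r : ℝ | ∃ x y : X, x ≠ y ∧ r = dist (f x) (f y) / dist x y} := by
      refine ⟨0, ?_⟩
      rintro r ⟨a, b, hab, rfl⟩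
      exact div_nonneg dist_nonneg dist_nonneg
    have hle := csInf_le hb (⟨x, y, hxy, rfl⟩ :
      dist (f x) (f y) / dist x y ∈ {r : ℝ | ∃ x y : X, x ≠ y ∧ r = dist (f x) (f y) / dist x y})
    exact (le_div_iff₀ (dist_pos.2 hxy)).1 hle

lemma le_lipMinus {f : X → X} {K : ℝ} (hX : ∃ a b : X, a ≠ b)
    (h : ∀ x y : X, K * dist x y ≤ dist (f x) (f y)) : K ≤ LipMinus f := by
  obtain ⟨a, b, hab⟩ := hX
  refine le_csInf ⟨_, a, b, hab, rfl⟩ ?_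
  rintro r ⟨x, y, hxy, rfl⟩
  rw [le_div_iff₀ (dist_pos.2 hxy)]
  exact h x y

lemma lipPlus_id (hX : ∃ a b : X, a ≠ b) : LipPlus (id : X → X) = 1 := by
  obtain ⟨a, b, hab⟩ := hX
  have : {r : ℝ | ∃ x y : X, x ≠ y ∧ r = dist (id x) (id y) / dist x y} = {1} := by
    ext r
    simp only [mem_setOf_eq, mem_singleton_iff, id_eq]
    constructor
    · rintro ⟨x, y, hxy, rfl⟩
      exact div_self (dist_pos.2 hxy).ne'
    · rintro rfl
      exact ⟨a, b, hab, (div_self (dist_pos.2 hab).ne').symm⟩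
  rw [LipPlus, this, csSup_singleton]

end Aux1
section Aux2
variable {X : Type*} [MetricSpace X] {N : ℕ} {S : Fin N → X → X}

lemma lipPlus_S_pos (hS : ∀ i, IsBiLipContraction (S i)) (i : Fin N) : 0 < LipPlus (S i) :=
  lt_of_lt_of_le (hS i).2.2.1 (hS i).2.2.2.1

lemma prod_lipPlus_pos (hS : ∀ i, IsBiLipContraction (S i)) (w : List (Fin N)) :
    0 < (w.map fun i => LipPlus (S i)).prod := by
  induction w with
  | nil => simp
  | cons i t ih =>
    simp only [List.map_cons, List.prod_cons]
    exact mul_pos (lipPlus_S_pos hS i) ih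

lemma prod_lipPlus_le_one (hS : ∀ i, IsBiLipContraction (S i)) (w : List (Fin N)) :
    (w.map fun i => LipPlus (S i)).prod ≤ 1 := by
  induction w with
  | nil => simp
  | cons i t ih =>
    simp only [List.map_cons, List.prod_cons]
    exact mul_le_one₀ ((hS i).2.2.2.2).le (prod_lipPlus_pos hS t).le ih

lemma prod_lipPlus_lt_one (hS : ∀ i, IsBiLipContraction (S i)) {w : List (Fin N)}
    (hw : w ≠ []) : (w.map fun i => LipPlus (S i)).prod < 1 := by
  cases w with
  | nil => exact absurd rfl hw
  | cons i t =>
    simp only [List.map_cons, List.prod_cons]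
    calc LipPlus (S i) * (t.map fun i => LipPlus (S i)).prod
        ≤ LipPlus (S i) * 1 :=
          mul_le_mul_of_nonneg_left (prod_lipPlus_le_one hS t) (lipPlus_S_pos hS i).le
      _ < 1 := by rw [mul_one]; exact (hS i).2.2.2.2

lemma prod_lipMinus_pos (hS : ∀ i, IsBiLipContraction (S i)) (w : List (Fin N)) :
    0 < (w.map fun i => LipMinus (S i)).prod := by
  induction w with
  | nil => simp
  | cons i t ih =>
    simp only [List.map_cons, List.prod_cons]
    exact mul_pos (hS i).2.2.1 ih

lemma compList_dist_le (hS : ∀ i, IsBiLipContraction (S i)) (w : List (Fin N)) (x y : X) :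
    dist (compList S w x) (compList S w y) ≤ (w.map fun i => LipPlus (S i)).prod * dist x y := by
  induction w with
  | nil => simp [compList]
  | cons i t ih =>
    simp only [List.map_cons, List.prod_cons, compList, Function.comp_apply]
    calc dist (S i (compList S t x)) (S i (compList S t y))
        ≤ LipPlus (S i) * dist (compList S t x) (compList S t y) := (hS i).1 _ _
      _ ≤ LipPlus (S i) * ((t.map fun i => LipPlus (S i)).prod * dist x y) :=
          mul_le_mul_of_nonneg_left ih (lipPlus_S_pos hS i).le
      _ = LipPlus (S i) * (t.map fun i => LipPlus (S i)).prod * dist x y := by ring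

lemma compList_dist_ge (hS : ∀ i, IsBiLipContraction (S i)) (w : List (Fin N)) (x y : X) :
    (w.map fun i => LipMinus (S i)).prod * dist x y ≤
      dist (compList S w x) (compList S w y) := by
  induction w with
  | nil => simp [compList]
  | cons i t ih =>
    simp only [List.map_cons, List.prod_cons, compList, Function.comp_apply]
    calc LipMinus (S i) * (t.map fun i => LipMinus (S i)).prod * dist x y
        = LipMinus (S i) * ((t.map fun i => LipMinus (S i)).prod * dist x y) := by ring
      _ ≤ LipMinus (S i) * dist (compList S t x) (compList S t y) :=
          mul_le_mul_of_nonneg_left ih (hS i).2.2.1.le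
      _ ≤ dist (S i (compList S t x)) (S i (compList S t y)) := (hS i).2.1 _ _

lemma dist_le_lipPlus_compList (hS : ∀ i, IsBiLipContraction (S i)) (w : List (Fin N)) (x y : X) :
    dist (compList S w x) (compList S w y) ≤ LipPlus (compList S w) * dist x y :=
  dist_le_lipPlus (compList_dist_le hS w) x y

lemma lipPlus_compList_le_prod (hS : ∀ i, IsBiLipContraction (S i)) (w : List (Fin N)) :
    LipPlus (compList S w) ≤ (w.map fun i => LipPlus (S i)).prod :=
  lipPlus_le (prod_lipPlus_pos hS w).le (compList_dist_le hS w)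

lemma prod_le_lipMinus_compList (hS : ∀ i, IsBiLipContraction (S i)) (hX : ∃ a b : X, a ≠ b)
    (w : List (Fin N)) :
    (w.map fun i => LipMinus (S i)).prod ≤ LipMinus (compList S w) :=
  le_lipMinus hX (compList_dist_ge hS w)

lemma lipMinus_compList_pos (hS : ∀ i, IsBiLipContraction (S i)) (hX : ∃ a b : X, a ≠ b)
    (w : List (Fin N)) : 0 < LipMinus (compList S w) :=
  lt_of_lt_of_le (prod_lipMinus_pos hS w) (prod_le_lipMinus_compList hS hX w)

lemma lipPlus_compList_pos (hS : ∀ i, IsBiLipContraction (S i)) (hX : ∃ a b : X, a ≠ b)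
    (w : List (Fin N)) : 0 < LipPlus (compList S w) := by
  obtain ⟨a, b, hab⟩ := hX
  have h1 := lipMinus_dist_le (compList S w) a b
  have h2 := dist_le_lipPlus_compList hS w a b
  have hd : 0 < dist a b := dist_pos.2 hab
  have := le_of_mul_le_mul_right (h1.trans h2) hd
  exact lt_of_lt_of_le (lipMinus_compList_pos hS ⟨a, b, hab⟩ w) this

lemma lipPlus_compList_lt_one (hS : ∀ i, IsBiLipContraction (S i)) {w : List (Fin N)}
    (hw : w ≠ []) : LipPlus (compList S w) < 1 :=
  lt_of_le_of_lt (lipPlus_compList_le_prod hS w) (prod_lipPlus_lt_one hS hw)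

lemma compList_append' (w₁ w₂ : List (Fin N)) :
    compList S (w₁ ++ w₂) = compList S w₁ ∘ compList S w₂ := by
  induction w₁ with
  | nil => simp [compList]
  | cons i t ih => simp [compList, ih, Function.comp_assoc]

lemma lipPlus_compList_append_le (hS : ∀ i, IsBiLipContraction (S i)) (w₁ w₂ : List (Fin N)) :
    LipPlus (compList S (w₁ ++ w₂)) ≤ LipPlus (compList S w₁) * LipPlus (compList S w₂) := by
  apply lipPlus_le (mul_nonneg (myLipPlus_nonneg _) (myLipPlus_nonneg _))
  intro x y
  rw [compList_append']
  calc dist (compList S w₁ (compList S w₂ x)) (compList S w₁ (compList S w₂ y))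
      ≤ LipPlus (compList S w₁) * dist (compList S w₂ x) (compList S w₂ y) :=
        dist_le_lipPlus_compList hS w₁ _ _
    _ ≤ LipPlus (compList S w₁) * (LipPlus (compList S w₂) * dist x y) :=
        mul_le_mul_of_nonneg_left (dist_le_lipPlus_compList hS w₂ x y) (myLipPlus_nonneg _)
    _ = LipPlus (compList S w₁) * LipPlus (compList S w₂) * dist x y := by ring

lemma compList_injective (hS : ∀ i, IsBiLipContraction (S i)) (hX : ∃ a b : X, a ≠ b)
    (w : List (Fin N)) : Function.Injective (compList S w) := by
  intro x y h
  by_contra hxy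
  have h1 := lipMinus_dist_le (compList S w) x y
  rw [h, dist_self] at h1
  have := mul_pos (lipMinus_compList_pos hS hX w) (dist_pos.2 hxy)
  linarith

lemma lipschitzWith_compList (hS : ∀ i, IsBiLipContraction (S i)) (w : List (Fin N)) :
    LipschitzWith (Real.toNNReal (LipPlus (compList S w))) (compList S w) := by
  apply LipschitzWith.of_dist_le_mul
  intro x y
  rw [Real.coe_toNNReal _ (myLipPlus_nonneg _)]
  exact dist_le_lipPlus_compList hS w x y

lemma antilipschitz_compList (hS : ∀ i, IsBiLipContraction (S i)) (hX : ∃ a b : X, a ≠ b)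
    (w : List (Fin N)) :
    AntilipschitzWith (Real.toNNReal (LipMinus (compList S w))⁻¹) (compList S w) := by
  rw [antilipschitzWith_iff_le_mul_dist]
  intro x y
  have hm := lipMinus_compList_pos hS hX w
  have h := lipMinus_dist_le (compList S w) x y
  rw [Real.coe_toNNReal _ (inv_nonneg.2 hm.le)]
  rw [inv_mul_eq_div, le_div_iff₀ hm, mul_comm]
  exact h

end Aux2
section Aux3
variable {X : Type*} [MetricSpace X] {N : ℕ} {S : Fin N → X → X}

lemma append_bijective (k j : ℕ) :
    Function.Bijective (fun p : (Fin k → Fin N) × (Fin j → Fin N) => Fin.append p.1 p.2) := by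
  constructor
  · rintro ⟨a, b⟩ ⟨a', b'⟩ h
    have h2 : List.ofFn a ++ List.ofFn b = List.ofFn a' ++ List.ofFn b' := by
      rw [← List.ofFn_fin_append, ← List.ofFn_fin_append]
      exact congrArg List.ofFn h
    have hl := List.append_inj h2 (by simp)
    exact Prod.ext (List.ofFn_injective hl.1) (List.ofFn_injective hl.2)
  · intro w
    refine ⟨⟨w ∘ Fin.castAdd j, w ∘ Fin.natAdd k⟩, funext fun i => ?_⟩
    exact Fin.addCases (fun l => by simp) (fun r => by simp) i

lemma sum_words_submult (hS : ∀ i, IsBiLipContraction (S i)) (k j : ℕ) {t : ℝ} (ht : 0 ≤ t) :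
    ∑ w : Fin (k + j) → Fin N, LipPlus (compList S (List.ofFn w)) ^ t
      ≤ (∑ w : Fin k → Fin N, LipPlus (compList S (List.ofFn w)) ^ t) *
        (∑ w : Fin j → Fin N, LipPlus (compList S (List.ofFn w)) ^ t) := by
  have hre : ∑ w : Fin (k + j) → Fin N, LipPlus (compList S (List.ofFn w)) ^ t
      = ∑ p : (Fin k → Fin N) × (Fin j → Fin N),
          LipPlus (compList S (List.ofFn p.1 ++ List.ofFn p.2)) ^ t := by
    refine (Fintype.sum_bijective _ (append_bijective k j) _ _ fun p => ?_).symm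
    rw [List.ofFn_fin_append]
  rw [hre, Finset.sum_mul_sum]
  rw [← Fintype.sum_prod_type']
  apply Finset.sum_le_sum
  intro p _
  calc LipPlus (compList S (List.ofFn p.1 ++ List.ofFn p.2)) ^ t
      ≤ (LipPlus (compList S (List.ofFn p.1)) * LipPlus (compList S (List.ofFn p.2))) ^ t :=
        Real.rpow_le_rpow (myLipPlus_nonneg _) (lipPlus_compList_append_le hS _ _) ht
    _ = _ := Real.mul_rpow (myLipPlus_nonneg _) (myLipPlus_nonneg _)

lemma sum_words_pos (hS : ∀ i, IsBiLipContraction (S i)) (hX : ∃ a b : X, a ≠ b)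
    (hN : 0 < N) (k : ℕ) (t : ℝ) :
    0 < ∑ w : Fin k → Fin N, LipPlus (compList S (List.ofFn w)) ^ t := by
  have : Nonempty (Fin k → Fin N) := ⟨fun _ => ⟨0, hN⟩⟩
  exact Finset.sum_pos
    (fun w _ => Real.rpow_pos_of_pos (lipPlus_compList_pos hS hX _) t)
    Finset.univ_nonempty

lemma sum_words_strict_anti (hS : ∀ i, IsBiLipContraction (S i)) (hX : ∃ a b : X, a ≠ b)
    (hN : 0 < N) {k : ℕ} (hk : 1 ≤ k) {t₁ t₂ : ℝ} (h : t₁ < t₂) :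
    ∑ w : Fin k → Fin N, LipPlus (compList S (List.ofFn w)) ^ t₂
      < ∑ w : Fin k → Fin N, LipPlus (compList S (List.ofFn w)) ^ t₁ := by
  have : Nonempty (Fin k → Fin N) := ⟨fun _ => ⟨0, hN⟩⟩
  refine Finset.sum_lt_sum_of_nonempty Finset.univ_nonempty fun w _ => ?_
  have hne : List.ofFn w ≠ [] := by
    simp only [ne_eq, List.ofFn_eq_nil_iff]
    omega
  exact Real.rpow_lt_rpow_of_exponent_gt (lipPlus_compList_pos hS hX _)
    (lipPlus_compList_lt_one hS hne) h

end Aux3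
section Aux4
variable {X : Type*} [MetricSpace X] {N : ℕ} {S : Fin N → X → X}

lemma exponent_nonneg (hS : ∀ i, IsBiLipContraction (S i)) (hX : ∃ a b : X, a ≠ b)
    (hN : 0 < N) {k : ℕ} (hk : 1 ≤ k) {t : ℝ}
    (h1 : ∑ w : Fin k → Fin N, LipPlus (compList S (List.ofFn w)) ^ t = 1) : 0 ≤ t := by
  by_contra ht
  push_neg at ht
  have hlt := sum_words_strict_anti hS hX hN hk ht
  rw [h1] at hlt
  have : ∑ w : Fin k → Fin N, LipPlus (compList S (List.ofFn w)) ^ (0 : ℝ)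
      = (Fintype.card (Fin k → Fin N) : ℝ) := by
    simp [Real.rpow_zero]
  rw [this] at hlt
  have hcard : 1 ≤ Fintype.card (Fin k → Fin N) := Fintype.card_pos_iff.2 ⟨fun _ => ⟨0, hN⟩⟩
  have : (1 : ℝ) ≤ (Fintype.card (Fin k → Fin N) : ℝ) := by exact_mod_cast hcard
  linarith

lemma s_le_sk (hS : ∀ i, IsBiLipContraction (S i)) (hX : ∃ a b : X, a ≠ b)
    (hN : 0 < N) (sk : ℕ → ℝ)
    (hsk : ∀ k, 1 ≤ k → ∑ w : Fin k → Fin N, LipPlus (compList S (List.ofFn w)) ^ sk k = 1)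
    (s : ℝ) (hs : Filter.Tendsto sk Filter.atTop (nhds s)) {k : ℕ} (hk : 1 ≤ k) :
    s ≤ sk k := by
  have ht0 : 0 ≤ sk k := exponent_nonneg hS hX hN hk (hsk k hk)
  have hm : ∀ m, 1 ≤ m →
      ∑ w : Fin (k * m) → Fin N, LipPlus (compList S (List.ofFn w)) ^ sk k ≤ 1 := by
    intro m hm
    induction m, hm using Nat.le_induction with
    | base => rw [mul_one]; exact (hsk k hk).le
    | succ m hm ih =>
      have : k * (m + 1) = k * m + k := Nat.mul_succ k m
      rw [this]
      calc ∑ w : Fin (k * m + k) → Fin N, LipPlus (compList S (List.ofFn w)) ^ sk k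
          ≤ (∑ w : Fin (k * m) → Fin N, LipPlus (compList S (List.ofFn w)) ^ sk k) *
            (∑ w : Fin k → Fin N, LipPlus (compList S (List.ofFn w)) ^ sk k) :=
            sum_words_submult hS _ _ ht0
        _ ≤ 1 * 1 := by
            apply mul_le_mul ih (hsk k hk).le (sum_words_pos hS hX hN k _).le zero_le_one
        _ = 1 := mul_one 1
  have hskm : ∀ m, 1 ≤ m → sk (k * m) ≤ sk k := by
    intro m hm'
    by_contra hcon
    push_neg at hcon
    have hkm : 1 ≤ k * m := Nat.one_le_iff_ne_zero.2 (by positivity)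
    have := sum_words_strict_anti hS hX hN hkm hcon
    rw [hsk (k * m) hkm] at this
    have := hm m hm'
    linarith
  have htend : Filter.Tendsto (fun m => sk (k * m)) Filter.atTop (nhds s) := by
    apply hs.comp
    apply Filter.tendsto_atTop_mono (fun m => Nat.le_mul_of_pos_left m hk) Filter.tendsto_id
  exact le_of_tendsto htend (Filter.eventually_atTop.2 ⟨1, fun m hm' => hskm m hm'⟩)

end Aux4
section Aux5
variable {X : Type*} [MetricSpace X] {N : ℕ} {S : Fin N → X → X}

lemma S_injective (hS : ∀ i, IsBiLipContraction (S i)) (i : Fin N) :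
    Function.Injective (S i) := by
  intro x y h
  by_contra hxy
  have h1 := (hS i).2.1 x y
  rw [h, dist_self] at h1
  have := mul_pos (hS i).2.2.1 (dist_pos.2 hxy)
  linarith

lemma compList_image_subset_U {U : Set X} (hU : ∀ i, S i '' U ⊆ U) (w : List (Fin N)) :
    compList S w '' U ⊆ U := by
  induction w with
  | nil => simp [compList]
  | cons i t ih =>
    have : compList S (i :: t) '' U = S i '' (compList S t '' U) := by
      rw [show compList S (i :: t) = S i ∘ compList S t from rfl, Set.image_comp]
    rw [this]
    exact le_trans (Set.image_mono ih) (hU i)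

lemma compList_image_C_subset {U C : Set X} (hCU : C ⊆ U) (hU : ∀ i, S i '' U ⊆ U)
    (i : Fin N) (t : List (Fin N)) :
    compList S (i :: t) '' C ⊆ S i '' U := by
  have : compList S (i :: t) '' C = S i '' (compList S t '' C) := by
    rw [show compList S (i :: t) = S i ∘ compList S t from rfl, Set.image_comp]
  rw [this]
  apply Set.image_mono
  exact le_trans (Set.image_mono hCU) (compList_image_subset_U hU t)

lemma disjoint_words (hS : ∀ i, IsBiLipContraction (S i))
    {U C : Set X} (hCU : C ⊆ U) (hCd : ∀ i, Disjoint C (S i '' U))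
    (hU : ∀ i, S i '' U ⊆ U) (hdisj : ∀ i j, i ≠ j → Disjoint (S i '' U) (S j '' U)) :
    ∀ w w' : List (Fin N), w.length ≤ w'.length → w ≠ w' →
      Disjoint (compList S w '' C) (compList S w' '' C) := by
  intro w
  induction w with
  | nil =>
    intro w' _ hne
    obtain ⟨i, t, rfl⟩ := List.exists_cons_of_ne_nil (Ne.symm hne)
    have h0 : compList S ([] : List (Fin N)) '' C = C := by simp [compList]
    rw [h0]
    exact (hCd i).mono_right (compList_image_C_subset hCU hU i t)
  | cons i t ih =>
    intro w' hlen hne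
    cases w' with
    | nil => simp at hlen
    | cons i' t' =>
      rcases eq_or_ne i i' with rfl | hii
      · have ht : t ≠ t' := fun h => hne (by rw [h])
        have hlen' : t.length ≤ t'.length := by simpa using hlen
        have hinner := ih t' hlen' ht
        have e1 : compList S (i :: t) '' C = S i '' (compList S t '' C) := by
          rw [show compList S (i :: t) = S i ∘ compList S t from rfl, Set.image_comp]
        have e2 : compList S (i :: t') '' C = S i '' (compList S t' '' C) := by
          rw [show compList S (i :: t') = S i ∘ compList S t' from rfl, Set.image_comp]
        rw [e1, e2]
        exact (Set.disjoint_image_iff (S_injective hS i)).2 hinner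
      · exact ((hdisj i i' hii).mono (compList_image_C_subset hCU hU i t)
          (compList_image_C_subset hCU hU i' t'))

lemma C_subset_FC {C FC : Set X} (hFC : FC = (⋃ i, S i '' FC) ∪ C) : C ⊆ FC := by
  rw [hFC]; exact Set.subset_union_right

lemma compList_image_FC_subset {C FC : Set X} (hFC : FC = (⋃ i, S i '' FC) ∪ C)
    (w : List (Fin N)) : compList S w '' FC ⊆ FC := by
  induction w with
  | nil => simp [compList]
  | cons i t ih =>
    have e1 : compList S (i :: t) '' FC = S i '' (compList S t '' FC) := by
      rw [show compList S (i :: t) = S i ∘ compList S t from rfl, Set.image_comp]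
    rw [e1]
    refine le_trans (Set.image_mono ih) ?_
    intro x hx
    rw [hFC]
    exact Or.inl (Set.mem_iUnion.2 ⟨i, hx⟩)

lemma compList_image_C_subset_FC {C FC : Set X} (hFC : FC = (⋃ i, S i '' FC) ∪ C)
    (w : List (Fin N)) : compList S w '' C ⊆ FC :=
  le_trans (Set.image_mono (C_subset_FC hFC)) (compList_image_FC_subset hFC w)

end Aux5
open scoped NNReal ENNReal

section Aux6
variable {X : Type*} [MetricSpace X] [MeasurableSpace X] [BorelSpace X]
  {N : ℕ} {S : Fin N → X → X}

lemma measure_image_le (hS : ∀ i, IsBiLipContraction (S i)) (hX : ∃ a b : X, a ≠ b)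
    {C : Set X} {d : ℝ} (hd0 : 0 ≤ d) (w : List (Fin N)) :
    μH[d] (compList S w '' C) ≤ ENNReal.ofReal (LipPlus (compList S w) ^ d) * μH[d] C := by
  have h := (lipschitzWith_compList hS w).hausdorffMeasure_image_le hd0 C
  have hpos := lipPlus_compList_pos hS hX w
  have he : ((Real.toNNReal (LipPlus (compList S w)) : ℝ≥0) : ℝ≥0∞)
      = ENNReal.ofReal (LipPlus (compList S w)) := rfl
  rw [he, ENNReal.ofReal_rpow_of_pos hpos] at h
  exact h

lemma le_measure_image (hS : ∀ i, IsBiLipContraction (S i)) (hX : ∃ a b : X, a ≠ b)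
    {C : Set X} {d : ℝ} (hd0 : 0 ≤ d) (w : List (Fin N)) :
    ENNReal.ofReal (LipMinus (compList S w) ^ d) * μH[d] C ≤ μH[d] (compList S w '' C) := by
  have h := (antilipschitz_compList hS hX w).le_hausdorffMeasure_image hd0 C
  have hm := lipMinus_compList_pos hS hX w
  have hK : ((Real.toNNReal (LipMinus (compList S w))⁻¹ : ℝ≥0) : ℝ≥0∞) ^ d
      = (ENNReal.ofReal (LipMinus (compList S w) ^ d))⁻¹ := by
    have he : ((Real.toNNReal (LipMinus (compList S w))⁻¹ : ℝ≥0) : ℝ≥0∞)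
        = ENNReal.ofReal (LipMinus (compList S w))⁻¹ := rfl
    rw [he, ENNReal.ofReal_rpow_of_pos (inv_pos.2 hm), Real.inv_rpow hm.le,
      ENNReal.ofReal_inv_of_pos (Real.rpow_pos_of_pos hm d)]
  rw [hK] at h
  have hne : ENNReal.ofReal (LipMinus (compList S w) ^ d) ≠ 0 :=
    (ENNReal.ofReal_pos.2 (Real.rpow_pos_of_pos hm d)).ne'
  rw [ENNReal.mul_le_iff_le_inv hne ENNReal.ofReal_ne_top]
  exact h

lemma prod_le_pow_rho (hS : ∀ i, IsBiLipContraction (S i)) {ρ : ℝ}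
    (hρi : ∀ i, LipPlus (S i) ≤ ρ) (hρ0 : 0 ≤ ρ) (w : List (Fin N)) :
    (w.map fun i => LipPlus (S i)).prod ≤ ρ ^ w.length := by
  induction w with
  | nil => simp
  | cons i t ih =>
    simp only [List.map_cons, List.prod_cons, List.length_cons, pow_succ]
    rw [mul_comm (ρ ^ t.length) ρ]
    exact mul_le_mul (hρi i) ih (prod_lipPlus_pos hS t).le hρ0

end Aux6

/-- **Theorem 2.4 (iii).** Under the COSC and bounded distortion, with `d = dim_H F_C` and
`0 < ℋ^d(C) < ∞`: `ℋ^d(F_C) = ∞` if and only if `d ≤ s`. -/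
theorem hausdorff_measure_inhomogeneous_attractor_infinite_iff
    {X : Type*} [MetricSpace X] [CompactSpace X] [MeasurableSpace X] [BorelSpace X]
    {N : ℕ} (S : Fin N → X → X) (hS : ∀ i, IsBiLipContraction (S i))
    (C : Set X) (hCc : IsCompact C)
    (FC : Set X) (hFCc : IsCompact FC) (hFCne : FC.Nonempty)
    (hFC : FC = (⋃ i, S i '' FC) ∪ C)
    (sk : ℕ → ℝ)
    (hsk : ∀ k, 1 ≤ k → ∑ w : Fin k → Fin N, LipPlus (compList S (List.ofFn w)) ^ sk k = 1)
    (s : ℝ) (hs : Filter.Tendsto sk Filter.atTop (𝓝 s))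
    (d : ℝ) (hd0 : 0 ≤ d) (hd : dimH FC = ENNReal.ofReal d)
    (hC0 : 0 < μH[d] C) (hC1 : μH[d] C < ⊤)
    (hcosc : COSC S C) (hBD : BoundedDistortion S) :
    μH[d] FC = ⊤ ↔ d ≤ s := by
  classical
  -- N is positive
  rcases Nat.eq_zero_or_pos N with hN0 | hN
  · exfalso
    have h1 := hsk 1 le_rfl
    subst hN0
    haveI : IsEmpty (Fin 1 → Fin 0) := ⟨fun f => (f 0).elim0⟩
    rw [Finset.univ_eq_empty, Finset.sum_empty] at h1
    exact zero_ne_one h1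
  -- X is nontrivial
  have hX : ∃ a b : X, a ≠ b := by
    by_contra h
    push_neg at h
    have hpos := (hS ⟨0, hN⟩).2.2.1
    have hempty : {r : ℝ | ∃ x y : X, x ≠ y ∧
        r = dist (S ⟨0, hN⟩ x) (S ⟨0, hN⟩ y) / dist x y} = ∅ := by
      ext r
      simp only [Set.mem_setOf_eq, Set.mem_empty_iff_false, iff_false, not_exists]
      intro x y hxy
      exact absurd (h x y) hxy.1
    rw [LipMinus, hempty, Real.sInf_empty] at hpos
    exact lt_irrefl 0 hpos
  obtain ⟨U, hUopen, hCsub, hUmap, hUdisj⟩ := hcosc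
  have hCU : C ⊆ U := fun x hx => (hCsub hx).1
  have hCd : ∀ i, Disjoint C (S i '' U) := by
    intro i
    rw [Set.disjoint_left]
    intro x hx hxi
    exact (hCsub hx).2 (Set.mem_iUnion.2 ⟨i, subset_closure hxi⟩)
  obtain ⟨L, hL1, hLw⟩ := hBD
  have hMeas : ∀ w : List (Fin N), MeasurableSet (compList S w '' C) := fun w =>
    (hCc.image (lipschitzWith_compList hS w).continuous).measurableSet
  have hs_le : ∀ k : ℕ, 1 ≤ k → s ≤ sk k := fun k hk => s_le_sk hS hX hN sk hsk s hs hk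
  constructor
  · intro htop
    by_contra hds
    push_neg at hds
    have hev : ∀ᶠ k in Filter.atTop, sk k < d := hs.eventually (gt_mem_nhds hds)
    obtain ⟨k0, hk0d, hk01⟩ := (hev.and (Filter.eventually_ge_atTop 1)).exists
    set a : ℕ → ℝ := fun n => ∑ w : Fin n → Fin N, LipPlus (compList S (List.ofFn w)) ^ d
      with ha
    have ha0 : a 0 = 1 := by
      have h1 : ∀ w : Fin 0 → Fin N, LipPlus (compList S (List.ofFn w)) ^ d = 1 := by
        intro w
        have h2 : List.ofFn w = ([] : List (Fin N)) := by simp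
        rw [h2, show compList S ([] : List (Fin N)) = id from rfl, lipPlus_id hX, Real.one_rpow]
      rw [ha]
      simp only [h1, Finset.sum_const]
      simp
    have hapos : ∀ n, 0 < a n := fun n => sum_words_pos hS hX hN n d
    have hasub : ∀ i j, a (i + j) ≤ a i * a j := fun i j => sum_words_submult hS i j hd0
    have hc1 : a k0 < 1 := by
      have h1 := sum_words_strict_anti hS hX hN hk01 hk0d
      rw [hsk k0 hk01] at h1
      exact h1
    have hblock : ∀ q r : ℕ, a (q * k0 + r) ≤ a k0 ^ q * a r := by
      intro q
      induction q with
      | zero => intro r; simp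
      | succ q ih =>
        intro r
        have hnat : (q + 1) * k0 + r = k0 + (q * k0 + r) := by ring
        rw [hnat]
        calc a (k0 + (q * k0 + r)) ≤ a k0 * a (q * k0 + r) := hasub _ _
          _ ≤ a k0 * (a k0 ^ q * a r) := mul_le_mul_of_nonneg_left (ih r) (hapos k0).le
          _ = a k0 ^ (q + 1) * a r := by ring
    haveI : NeZero k0 := ⟨by omega⟩
    have hT : (∑' j : ℕ, ENNReal.ofReal (a j)) ≠ ⊤ := by
      have hre := (Nat.divModEquiv k0).symm.tsum_eq (fun j => ENNReal.ofReal (a j))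
      rw [← hre]
      have hle : ∀ p : ℕ × Fin k0,
          ENNReal.ofReal (a ((Nat.divModEquiv k0).symm p))
            ≤ ENNReal.ofReal (a k0) ^ p.1 * ENNReal.ofReal (a p.2) := by
        intro p
        have hp : ((Nat.divModEquiv k0).symm p : ℕ) = p.1 * k0 + (p.2 : ℕ) := rfl
        rw [hp]
        calc ENNReal.ofReal (a (p.1 * k0 + (p.2 : ℕ)))
            ≤ ENNReal.ofReal (a k0 ^ p.1 * a p.2) :=
              ENNReal.ofReal_le_ofReal (hblock p.1 p.2)
          _ = ENNReal.ofReal (a k0 ^ p.1) * ENNReal.ofReal (a (p.2 : ℕ)) :=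
              ENNReal.ofReal_mul (pow_nonneg (hapos k0).le _)
          _ = ENNReal.ofReal (a k0) ^ p.1 * ENNReal.ofReal (a (p.2 : ℕ)) := by
              rw [ENNReal.ofReal_pow (hapos k0).le]
      refine ne_top_of_le_ne_top ?_ (ENNReal.tsum_le_tsum hle)
      rw [ENNReal.tsum_prod (f := fun (q : ℕ) (r : Fin k0) => ENNReal.ofReal (a k0) ^ q * ENNReal.ofReal (a (r : ℕ)))]
      have hinner : ∀ q : ℕ,
          (∑' r : Fin k0, ENNReal.ofReal (a k0) ^ q * ENNReal.ofReal (a (r : ℕ)))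
            = ENNReal.ofReal (a k0) ^ q * ∑' r : Fin k0, ENNReal.ofReal (a (r : ℕ)) :=
        fun q => ENNReal.tsum_mul_left
      simp only [hinner]
      rw [ENNReal.tsum_mul_right, ENNReal.tsum_geometric]
      apply ENNReal.mul_ne_top
      · have hlt1 : ENNReal.ofReal (a k0) < 1 := ENNReal.ofReal_lt_one.2 hc1
        rw [Ne, ENNReal.inv_eq_top, tsub_eq_zero_iff_le]
        exact not_le.2 hlt1
      · rw [tsum_fintype]
        exact ENNReal.sum_ne_top.2 fun r _ => ENNReal.ofReal_ne_top
    set Einf : Set X := ⋂ k : ℕ, ⋃ w : Fin k → Fin N, compList S (List.ofFn w) '' FC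
      with hEinfdef
    have hcover : FC ⊆ Einf ∪ ⋃ j : ℕ, ⋃ w : Fin j → Fin N, compList S (List.ofFn w) '' C := by
      intro x hx
      by_cases hxe : x ∈ ⋃ j : ℕ, ⋃ w : Fin j → Fin N, compList S (List.ofFn w) '' C
      · exact Or.inr hxe
      · left
        rw [hEinfdef]
        refine Set.mem_iInter.2 fun k => ?_
        induction k with
        | zero =>
          refine Set.mem_iUnion.2 ⟨fun i => i.elim0, ?_⟩
          refine ⟨x, hx, ?_⟩
          show compList S (List.ofFn (fun i : Fin 0 => i.elim0)) x = x
          have h2 : List.ofFn (fun i : Fin 0 => (i.elim0 : Fin N)) = ([] : List (Fin N)) := by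
            simp
          rw [h2]
          rfl
        | succ k ihk =>
          obtain ⟨w, y, hy, hxy⟩ := Set.mem_iUnion.1 ihk
          rw [hFC] at hy
          rcases hy with hy | hy
          · obtain ⟨t, ⟨i, rfl⟩, hti⟩ := hy
            obtain ⟨z, hz, hyz⟩ := hti
            refine Set.mem_iUnion.2 ⟨Fin.snoc w i, ⟨z, hz, ?_⟩⟩
            have hofn : List.ofFn (Fin.snoc w i : Fin (k + 1) → Fin N)
                = List.ofFn w ++ [i] := by
              rw [List.ofFn_succ']
              simp [Fin.snoc_castSucc, Fin.snoc_last, List.concat_eq_append]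
            rw [hofn, compList_append']
            show compList S (List.ofFn w) (compList S [i] z) = x
            have : compList S [i] z = S i z := rfl
            rw [this, hyz, hxy]
          · have hxmem : x ∈ compList S (List.ofFn w) '' C := ⟨y, hy, hxy⟩
            exact absurd (Set.mem_iUnion.2 ⟨k, Set.mem_iUnion.2 ⟨w, hxmem⟩⟩) hxe
    have hDne : EMetric.diam FC ≠ ⊤ := hFCc.isBounded.ediam_ne_top
    haveI : Nonempty (Fin N) := ⟨⟨0, hN⟩⟩
    set ρ : ℝ := Finset.univ.sup' Finset.univ_nonempty (fun i => LipPlus (S i)) with hρdef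
    have hρi : ∀ i, LipPlus (S i) ≤ ρ := fun i => by
      rw [hρdef]
      exact Finset.le_sup' (fun i => LipPlus (S i)) (Finset.mem_univ i)
    have hρlt : ρ < 1 := by
      rw [hρdef]
      exact (Finset.sup'_lt_iff Finset.univ_nonempty).2 fun i _ => (hS i).2.2.2.2
    have hρ0 : (0:ℝ) ≤ ρ := le_trans (lipPlus_S_pos hS ⟨0, hN⟩).le (hρi ⟨0, hN⟩)
    have hdiam2 : ∀ (n : ℕ) (w : Fin n → Fin N),
        EMetric.diam (compList S (List.ofFn w) '' FC)
          ≤ ENNReal.ofReal ρ ^ n * EMetric.diam FC := by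
      intro n w
      have h1 : EMetric.diam (compList S (List.ofFn w) '' FC)
          ≤ ENNReal.ofReal (LipPlus (compList S (List.ofFn w))) * EMetric.diam FC :=
        (lipschitzWith_compList hS _).ediam_image_le FC
      refine le_trans h1 (mul_le_mul_left ?_ _)
      calc ENNReal.ofReal (LipPlus (compList S (List.ofFn w)))
          ≤ ENNReal.ofReal (ρ ^ n) := ENNReal.ofReal_le_ofReal
            (le_trans (lipPlus_compList_le_prod hS _)
              (by simpa using prod_le_pow_rho hS hρi hρ0 (List.ofFn w)))
        _ = ENNReal.ofReal ρ ^ n := ENNReal.ofReal_pow hρ0 n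
    have hEinf0 : μH[d] Einf = 0 := by
      have hρofr : ENNReal.ofReal ρ < 1 := ENNReal.ofReal_lt_one.2 hρlt
      have hk0mul : Filter.Tendsto (fun n : ℕ => k0 * n) Filter.atTop Filter.atTop :=
        Filter.tendsto_atTop_mono (fun n => Nat.le_mul_of_pos_left n (by omega))
          Filter.tendsto_id
      have hr0 : Filter.Tendsto
          (fun n : ℕ => ENNReal.ofReal ρ ^ (k0 * n) * EMetric.diam FC)
          Filter.atTop (𝓝 0) := by
        have h1 : Filter.Tendsto (fun n : ℕ => ENNReal.ofReal ρ ^ n) Filter.atTop (𝓝 0) :=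
          ENNReal.tendsto_pow_atTop_nhds_zero_of_lt_one hρofr
        have h2 := ENNReal.Tendsto.mul_const (h1.comp hk0mul) (Or.inr hDne)
        rw [zero_mul] at h2
        exact h2
      have hbound := MeasureTheory.Measure.hausdorffMeasure_le_liminf_sum d Einf
        (fun n : ℕ => ENNReal.ofReal ρ ^ (k0 * n) * EMetric.diam FC) hr0
        (fun n (w : Fin (k0 * n) → Fin N) => compList S (List.ofFn w) '' FC)
        (Filter.Eventually.of_forall fun n w => hdiam2 _ w)
        (Filter.Eventually.of_forall fun n => Set.iInter_subset
          (fun k : ℕ => ⋃ w : Fin k → Fin N, compList S (List.ofFn w) '' FC) (k0 * n))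
      have hterm : ∀ n : ℕ,
          (∑ w : Fin (k0 * n) → Fin N, EMetric.diam (compList S (List.ofFn w) '' FC) ^ d)
            ≤ ENNReal.ofReal (a k0) ^ n * EMetric.diam FC ^ d := by
        intro n
        have hstep : ∀ w : Fin (k0 * n) → Fin N,
            EMetric.diam (compList S (List.ofFn w) '' FC) ^ d
              ≤ ENNReal.ofReal (LipPlus (compList S (List.ofFn w)) ^ d)
                  * EMetric.diam FC ^ d := by
          intro w
          have h1 : EMetric.diam (compList S (List.ofFn w) '' FC)
              ≤ ENNReal.ofReal (LipPlus (compList S (List.ofFn w))) * EMetric.diam FC :=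
            (lipschitzWith_compList hS _).ediam_image_le FC
          calc EMetric.diam (compList S (List.ofFn w) '' FC) ^ d
              ≤ (ENNReal.ofReal (LipPlus (compList S (List.ofFn w)))
                  * EMetric.diam FC) ^ d := ENNReal.rpow_le_rpow h1 hd0
            _ = ENNReal.ofReal (LipPlus (compList S (List.ofFn w))) ^ d
                  * EMetric.diam FC ^ d := ENNReal.mul_rpow_of_nonneg _ _ hd0
            _ = ENNReal.ofReal (LipPlus (compList S (List.ofFn w)) ^ d)
                  * EMetric.diam FC ^ d := by
                rw [ENNReal.ofReal_rpow_of_pos (lipPlus_compList_pos hS hX _)]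
        calc (∑ w : Fin (k0 * n) → Fin N, EMetric.diam (compList S (List.ofFn w) '' FC) ^ d)
            ≤ ∑ w : Fin (k0 * n) → Fin N,
                ENNReal.ofReal (LipPlus (compList S (List.ofFn w)) ^ d)
                  * EMetric.diam FC ^ d := Finset.sum_le_sum fun w _ => hstep w
          _ = (∑ w : Fin (k0 * n) → Fin N,
                ENNReal.ofReal (LipPlus (compList S (List.ofFn w)) ^ d))
                  * EMetric.diam FC ^ d := (Finset.sum_mul _ _ _).symm
          _ = ENNReal.ofReal (a (k0 * n)) * EMetric.diam FC ^ d := by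
              rw [← ENNReal.ofReal_sum_of_nonneg
                (fun w _ => Real.rpow_nonneg (myLipPlus_nonneg _) d)]
          _ ≤ ENNReal.ofReal (a k0) ^ n * EMetric.diam FC ^ d := by
              apply mul_le_mul_left
              calc ENNReal.ofReal (a (k0 * n)) = ENNReal.ofReal (a (n * k0 + 0)) := by
                    rw [mul_comm, Nat.add_zero]
                _ ≤ ENNReal.ofReal (a k0 ^ n * a 0) :=
                    ENNReal.ofReal_le_ofReal (hblock n 0)
                _ = ENNReal.ofReal (a k0) ^ n := by
                    rw [ha0, mul_one, ENNReal.ofReal_pow (hapos k0).le]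
      have htendg : Filter.Tendsto
          (fun n : ℕ => ENNReal.ofReal (a k0) ^ n * EMetric.diam FC ^ d)
          Filter.atTop (𝓝 0) := by
        have h1 : Filter.Tendsto (fun n : ℕ => ENNReal.ofReal (a k0) ^ n)
            Filter.atTop (𝓝 0) :=
          ENNReal.tendsto_pow_atTop_nhds_zero_of_lt_one (ENNReal.ofReal_lt_one.2 hc1)
        have h2 := ENNReal.Tendsto.mul_const h1
          (Or.inr (ENNReal.rpow_ne_top_of_nonneg hd0 hDne))
        rw [zero_mul] at h2
        exact h2
      refine le_antisymm ?_ zero_le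
      calc μH[d] Einf ≤ _ := hbound
        _ ≤ Filter.liminf (fun n : ℕ =>
              ENNReal.ofReal (a k0) ^ n * EMetric.diam FC ^ d) Filter.atTop :=
            Filter.liminf_le_liminf (Filter.Eventually.of_forall hterm)
        _ = 0 := htendg.liminf_eq
    have hEj : ∀ j : ℕ, μH[d] (⋃ w : Fin j → Fin N, compList S (List.ofFn w) '' C)
        ≤ ENNReal.ofReal (a j) * μH[d] C := by
      intro j
      calc μH[d] (⋃ w : Fin j → Fin N, compList S (List.ofFn w) '' C)
          ≤ ∑ w : Fin j → Fin N, μH[d] (compList S (List.ofFn w) '' C) :=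
            measure_iUnion_fintype_le _ _
        _ ≤ ∑ w : Fin j → Fin N,
              ENNReal.ofReal (LipPlus (compList S (List.ofFn w)) ^ d) * μH[d] C :=
            Finset.sum_le_sum fun w _ => measure_image_le hS hX hd0 _
        _ = ENNReal.ofReal (a j) * μH[d] C := by
            rw [← Finset.sum_mul, ← ENNReal.ofReal_sum_of_nonneg
              (fun w _ => Real.rpow_nonneg (myLipPlus_nonneg _) d)]
    have hmain : μH[d] FC ≤ (∑' j : ℕ, ENNReal.ofReal (a j)) * μH[d] C := by
      calc μH[d] FC
          ≤ μH[d] (Einf ∪ ⋃ j : ℕ, ⋃ w : Fin j → Fin N, compList S (List.ofFn w) '' C) :=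
            measure_mono hcover
        _ ≤ μH[d] Einf
              + μH[d] (⋃ j : ℕ, ⋃ w : Fin j → Fin N, compList S (List.ofFn w) '' C) :=
            measure_union_le _ _
        _ ≤ μH[d] Einf + ∑' j : ℕ, μH[d] (⋃ w : Fin j → Fin N, compList S (List.ofFn w) '' C) :=
            add_le_add le_rfl (measure_iUnion_le _)
        _ ≤ μH[d] Einf + ∑' j : ℕ, ENNReal.ofReal (a j) * μH[d] C :=
            add_le_add le_rfl (ENNReal.tsum_le_tsum hEj)
        _ = (∑' j : ℕ, ENNReal.ofReal (a j)) * μH[d] C := by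
            rw [hEinf0, zero_add, ENNReal.tsum_mul_right]
    rw [htop, top_le_iff] at hmain
    exact ENNReal.mul_ne_top hT hC1.ne hmain
  · intro hds
    set E : ℕ → Set X := fun k => ⋃ w : Fin k → Fin N, compList S (List.ofFn w) '' C with hE
    have hEsub : ∀ k, E k ⊆ FC := fun k =>
      Set.iUnion_subset fun w => compList_image_C_subset_FC hFC _
    have hEmeas : ∀ k, MeasurableSet (E k) := fun k => MeasurableSet.iUnion fun w => hMeas _
    have hwords := disjoint_words hS hCU hCd hUmap hUdisj
    have hEdisj : ∀ k j : ℕ, k < j → Disjoint (E k) (E j) := by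
      intro k j hkj
      rw [Set.disjoint_iUnion_left]
      intro w
      rw [Set.disjoint_iUnion_right]
      intro w'
      apply hwords
      · simp [hkj.le]
      · intro hcon
        have := congrArg List.length hcon
        simp only [List.length_ofFn] at this
        omega
    have hEkey : ∀ k : ℕ, 1 ≤ k →
        ENNReal.ofReal (L⁻¹ ^ d) * μH[d] C ≤ μH[d] (E k) := by
      intro k hk
      have hne : ∀ w : Fin k → Fin N, List.ofFn w ≠ [] := by
        intro w
        simp only [ne_eq, List.ofFn_eq_nil_iff]
        omega
      have heq : μH[d] (E k) = ∑ w : Fin k → Fin N, μH[d] (compList S (List.ofFn w) '' C) := by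
        have hEk : E k = ⋃ w ∈ (Finset.univ : Finset (Fin k → Fin N)),
            compList S (List.ofFn w) '' C := by simp [hE]
        rw [hEk, measure_biUnion_finset ?_ fun w _ => hMeas _]
        intro w _ w' hw' hww'
        apply hwords _ _ (by simp) fun hcon => hww' (List.ofFn_injective hcon)
      have hL0 : (0:ℝ) < L := by linarith
      have hLm : ∀ w : Fin k → Fin N,
          L⁻¹ ^ d * LipPlus (compList S (List.ofFn w)) ^ d
            ≤ LipMinus (compList S (List.ofFn w)) ^ d := by
        intro w
        have h1 := hLw _ (hne w)
        have hmpos := lipMinus_compList_pos hS hX (List.ofFn w)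
        rw [div_lt_iff₀ hmpos] at h1
        have h2 : LipPlus (compList S (List.ofFn w)) / L
            < LipMinus (compList S (List.ofFn w)) := by
          rw [div_lt_iff₀ hL0]
          linarith [h1]
        have h3 : (LipPlus (compList S (List.ofFn w)) / L) ^ d
            ≤ LipMinus (compList S (List.ofFn w)) ^ d :=
          Real.rpow_le_rpow (div_nonneg (myLipPlus_nonneg _) hL0.le) h2.le hd0
        calc L⁻¹ ^ d * LipPlus (compList S (List.ofFn w)) ^ d
            = (L⁻¹ * LipPlus (compList S (List.ofFn w))) ^ d :=
              (Real.mul_rpow (inv_nonneg.2 hL0.le) (myLipPlus_nonneg _)).symm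
          _ = (LipPlus (compList S (List.ofFn w)) / L) ^ d := by
              rw [div_eq_mul_inv, mul_comm]
          _ ≤ _ := h3
      have hsum1 : (1:ℝ) ≤ ∑ w : Fin k → Fin N, LipPlus (compList S (List.ofFn w)) ^ d := by
        rw [← hsk k hk]
        apply Finset.sum_le_sum
        intro w _
        exact Real.rpow_le_rpow_of_exponent_ge (lipPlus_compList_pos hS hX _)
          (lipPlus_compList_lt_one hS (hne w)).le (hds.trans (hs_le k hk))
      have hL0d : (0:ℝ) ≤ L⁻¹ ^ d := Real.rpow_nonneg (inv_nonneg.2 hL0.le) d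
      have key1 : ENNReal.ofReal (L⁻¹ ^ d)
          ≤ ∑ w : Fin k → Fin N, ENNReal.ofReal (LipMinus (compList S (List.ofFn w)) ^ d) := by
        calc ENNReal.ofReal (L⁻¹ ^ d) = ENNReal.ofReal (L⁻¹ ^ d * 1) := by rw [mul_one]
          _ ≤ ENNReal.ofReal (L⁻¹ ^ d *
                ∑ w : Fin k → Fin N, LipPlus (compList S (List.ofFn w)) ^ d) :=
              ENNReal.ofReal_le_ofReal (mul_le_mul_of_nonneg_left hsum1 hL0d)
          _ = ENNReal.ofReal (∑ w : Fin k → Fin N,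
                L⁻¹ ^ d * LipPlus (compList S (List.ofFn w)) ^ d) := by rw [Finset.mul_sum]
          _ = ∑ w : Fin k → Fin N,
                ENNReal.ofReal (L⁻¹ ^ d * LipPlus (compList S (List.ofFn w)) ^ d) :=
              ENNReal.ofReal_sum_of_nonneg fun w _ =>
                mul_nonneg hL0d (Real.rpow_nonneg (myLipPlus_nonneg _) d)
          _ ≤ ∑ w : Fin k → Fin N,
                ENNReal.ofReal (LipMinus (compList S (List.ofFn w)) ^ d) :=
              Finset.sum_le_sum fun w _ => ENNReal.ofReal_le_ofReal (hLm w)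
      calc ENNReal.ofReal (L⁻¹ ^ d) * μH[d] C
          ≤ (∑ w : Fin k → Fin N,
              ENNReal.ofReal (LipMinus (compList S (List.ofFn w)) ^ d)) * μH[d] C :=
            mul_le_mul_left key1 _
        _ = ∑ w : Fin k → Fin N,
              ENNReal.ofReal (LipMinus (compList S (List.ofFn w)) ^ d) * μH[d] C :=
            Finset.sum_mul _ _ _
        _ ≤ ∑ w : Fin k → Fin N, μH[d] (compList S (List.ofFn w) '' C) :=
            Finset.sum_le_sum fun w _ => le_measure_image hS hX hd0 _
        _ = μH[d] (E k) := heq.symm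
    set c : ℝ≥0∞ := ENNReal.ofReal (L⁻¹ ^ d) * μH[d] C with hc
    have hL0 : (0:ℝ) < L := by linarith
    have hc0 : c ≠ 0 :=
      mul_ne_zero (ENNReal.ofReal_pos.2 (Real.rpow_pos_of_pos (inv_pos.2 hL0) d)).ne' hC0.ne'
    have hctop : c ≠ ⊤ := ENNReal.mul_ne_top ENNReal.ofReal_ne_top hC1.ne
    have hsum : ∀ M : ℕ, (M : ℝ≥0∞) * c ≤ μH[d] FC := by
      intro M
      have hpd : Set.PairwiseDisjoint (↑(Finset.Icc 1 M)) E := by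
        intro k _ j _ hkj
        rcases lt_or_gt_of_ne hkj with h | h
        · exact hEdisj k j h
        · exact (hEdisj j k h).symm
      calc (M : ℝ≥0∞) * c = ∑ _k ∈ Finset.Icc 1 M, c := by
            rw [Finset.sum_const, Nat.card_Icc]
            simp [nsmul_eq_mul]
        _ ≤ ∑ k ∈ Finset.Icc 1 M, μH[d] (E k) :=
            Finset.sum_le_sum fun k hk => hEkey k (Finset.mem_Icc.1 hk).1
        _ = μH[d] (⋃ k ∈ Finset.Icc 1 M, E k) :=
            (measure_biUnion_finset hpd fun k _ => hEmeas k).symm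
        _ ≤ μH[d] FC := measure_mono (Set.iUnion₂_subset fun k _ => hEsub k)
    by_contra hnetop
    obtain ⟨M, hM⟩ := ENNReal.exists_nat_gt (r := μH[d] FC / c) (ENNReal.div_lt_top hnetop hc0).ne
    have h2 : μH[d] FC < M * c := by
      rw [← ENNReal.div_lt_iff (Or.inl hc0) (Or.inl hctop)]
      exact hM
    exact absurd (hsum M) (not_le.2 h2)
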